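/- For Sastry's cyclic quadrilateral with sides a₁ = (t(u+v)+(1−uv))(u+v−t(1−uv)), a₂ = (1+u²)(v−t)(1+tv), a₃ = t(1+u²)(1+v²), a₄ = (1+v²)(u−t)(1+tu), Paramesvara's circumradius formula yields R = (1+t²)(1+u²)(1+v²)/4; equivalently, (a₁a₂+a₃a₄)(a₁a₃+a₂a₄)(a₁a₄+a₂a₃) = R² · (−a₁+a₂+a₃+a₄)(a₁−a₂+a₃+a₄)(a₁+a₂−a₃+a₄)(a₁+a₂+a₃−a₄). -/
import Mathlib
theorem sastry_quadrilateral_circumradius (t u v a1 a2 a3 a4 R : ℚ)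
    (ha1 : a1 = (t * (u + v) + (1 - u * v)) * (u + v - t * (1 - u * v)))
    (ha2 : a2 = (1 + u^2) * (v - t) * (1 + t * v))
    (ha3 : a3 = t * (1 + u^2) * (1 + v^2))
    (ha4 : a4 = (1 + v^2) * (u - t) * (1 + t * u))
    (hR : R = (1 + t^2) * (1 + u^2) * (1 + v^2) / 4) :
    (a1 * a2 + a3 * a4) * (a1 * a3 + a2 * a4) * (a1 * a4 + a2 * a3) =
      R^2 * ((-a1 + a2 + a3 + a4) * (a1 - a2 + a3 + a4) *
        (a1 + a2 - a3 + a4) * (a1 + a2 + a3 - a4)) := by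
  subst ha1 ha2 ha3 ha4 hR; ring
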